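/- Let d ≥ 1, n ≥ 1, p ∈ [0,1], and let μ be a partition of n into at most d parts with μ₂ ≥ 1. For a Borel probability measure q on the unitary group U(d), define ρ_=^{(q)} := ∫ U^{⊗n} |e_{(n)}⟩⟨e_{(n)}| (U^{⊗n})^† dq(U) and ρ_≠^{μ,(q)} := ∫ U^{⊗n} |e_μ⟩⟨e_μ| (U^{⊗n})^† dq(U), and for Hermitian Π with 0 ⪯ Π ⪯ I set g(Π, q) := p·Tr[Π ρ_=^{(q)}] + (1−p)·Tr[(I−Π) ρ_≠^{μ,(q)}]. Then the adversarial-unknown value equals the Haar-random value: inf over all Borel probability measures q on U(d) of (sup over Π with 0 ⪯ Π ⪯ I of g(Π,q)) equals sup over Π with 0 ⪯ Π ⪯ I of g(Π, q_Haar), where q_Haar is the Haar probability measure on U(d). -/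

import Mathlib

open MeasureTheory Matrix
open scoped ComplexOrder

noncomputable section

/-- The unitary group `U(d)`. -/
abbrev UG (d : ℕ) := Matrix.unitaryGroup (Fin d) ℂ

noncomputable instance (d : ℕ) : MeasurableSpace (UG d) := borel _

instance (d : ℕ) : BorelSpace (UG d) := ⟨rfl⟩

/-- The permutation matrix `ψ(π)` on `(ℂ^d)^{⊗n}`, with `(x,y)` entry `1` iff `y = x ∘ π`. -/
def psi (d n : ℕ) (π : Equiv.Perm (Fin n)) : Matrix (Fin n → Fin d) (Fin n → Fin d) ℂ :=
  Matrix.of fun x y => if y = x ∘ π then 1 else 0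

/-- The symmetrizer `Π_{(n)} = (1/n!) ∑_{π ∈ S_n} ψ(π)`. -/
def symmetrizer (d n : ℕ) : Matrix (Fin n → Fin d) (Fin n → Fin d) ℂ :=
  ((n.factorial : ℂ))⁻¹ • ∑ π : Equiv.Perm (Fin n), psi d n π

/-- The `n`-fold tensor power of a `d × d` matrix: `(U^{⊗n})_{x,y} = ∏ i, U_{x i, y i}`. -/
def tpow (d n : ℕ) (U : Matrix (Fin d) (Fin d) ℂ) :
    Matrix (Fin n → Fin d) (Fin n → Fin d) ℂ :=
  Matrix.of fun x y => ∏ i, U (x i) (y i)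

/-- The list consisting of `μ 0` copies of `0`, then `μ 1` copies of `1`, etc. -/
def wordList (d : ℕ) (μ : Fin d → ℕ) : List (Fin d) :=
  (List.ofFn fun i => List.replicate (μ i) i).flatten

lemma wordList_length (d : ℕ) (μ : Fin d → ℕ) : (wordList d μ).length = ∑ i, μ i := by
  simp [wordList, List.length_flatten, Function.comp, List.sum_ofFn]

/-- The word indexing the basis vector `|e_μ⟩`: the first `μ 0` tensor factors carry the
first basis label, the next `μ 1` factors the second basis label, etc. -/
def word (d n : ℕ) (μ : Fin d → ℕ) (hsum : ∑ i, μ i = n) (j : Fin n) : Fin d :=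
  (wordList d μ).get ⟨j, by rw [wordList_length, hsum]; exact j.isLt⟩

/-- `∫ U^{⊗n} |e_w⟩⟨e_w| (U^{⊗n})^† dq` for a basis word `w` (entrywise Bochner integral). -/
def rhoWord (d n : ℕ) (w : Fin n → Fin d) (q : Measure (UG d)) :
    Matrix (Fin n → Fin d) (Fin n → Fin d) ℂ :=
  Matrix.of fun x y =>
    ∫ U : UG d, tpow d n (U : Matrix (Fin d) (Fin d) ℂ) x w *
      star (tpow d n (U : Matrix (Fin d) (Fin d) ℂ) y w) ∂q

/-- The Haar-twirled unequal state `ρ_≠^μ`. -/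
def rhoNE (d n : ℕ) (μ : Fin d → ℕ) (hsum : ∑ i, μ i = n) (haar : Measure (UG d)) :
    Matrix (Fin n → Fin d) (Fin n → Fin d) ℂ :=
  rhoWord d n (word d n μ hsum) haar

/-- The partition `(n, 0, …, 0)`. -/
def muEq (d n : ℕ) (hd : 0 < d) : Fin d → ℕ := fun i => if i = ⟨0, hd⟩ then n else 0

lemma muEq_sum (d n : ℕ) (hd : 0 < d) : ∑ i, muEq d n hd i = n := by
  simp [muEq]

/-- The equal state `ρ_=^n = ρ_≠^{(n,0,…,0)}`. -/
def rhoEQ (d n : ℕ) (hd : 0 < d) (haar : Measure (UG d)) :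
    Matrix (Fin n → Fin d) (Fin n → Fin d) ℂ :=
  rhoNE d n (muEq d n hd) (muEq_sum d n hd) haar

/-- The set of POVM elements: Hermitian `P` with `0 ⪯ P ⪯ I`. -/
def POVMs (d n : ℕ) : Set (Matrix (Fin n → Fin d) (Fin n → Fin d) ℂ) :=
  {P | P.PosSemidef ∧ (1 - P).PosSemidef}

/-- The average success probability of the test `{P, I - P}` with prior `p` on the equal case. -/
def successProb (d n : ℕ) (hd : 0 < d) (μ : Fin d → ℕ) (hsum : ∑ i, μ i = n)
    (haar : Measure (UG d)) (p : ℝ) (P : Matrix (Fin n → Fin d) (Fin n → Fin d) ℂ) : ℝ :=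
  p * (Matrix.trace (P * rhoEQ d n hd haar)).re +
    (1 - p) * (1 - (Matrix.trace (P * rhoNE d n μ hsum haar)).re)

/-- The objective `g(Π, q) = p Tr[Π ρ_=^{(q)}] + (1-p) Tr[(I-Π) ρ_≠^{μ,(q)}]` for an
adversarially chosen measure `q` on `U(d)`. -/
def advSuccess (d n : ℕ) (hd : 0 < d) (μ : Fin d → ℕ) (hsum : ∑ i, μ i = n) (p : ℝ)
    (q : Measure (UG d)) (P : Matrix (Fin n → Fin d) (Fin n → Fin d) ℂ) : ℝ :=
  p * (Matrix.trace (P * rhoWord d n (word d n (muEq d n hd) (muEq_sum d n hd)) q)).re +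
    (1 - p) * (Matrix.trace ((1 - P) * rhoWord d n (word d n μ hsum) q)).re


/-! ### Auxiliary development for the minimax theorem -/

instance (d : ℕ) : SecondCountableTopology (Matrix (Fin d) (Fin d) ℂ) := by
  unfold Matrix; exact inferInstanceAs (SecondCountableTopology (Fin d → Fin d → ℂ))

instance (d : ℕ) : SecondCountableTopology (UG d) :=
  TopologicalSpace.Subtype.secondCountableTopology _

instance (d : ℕ) : ContinuousInv (UG d) := ⟨by
  apply continuous_induced_rng.mpr
  exact Continuous.matrix_conjTranspose continuous_subtype_val⟩

namespace AdvHaar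

variable {d n : ℕ}

lemma tpow_mul (A B : Matrix (Fin d) (Fin d) ℂ) :
    tpow d n (A * B) = tpow d n A * tpow d n B := by
  ext x y
  simp only [tpow, Matrix.mul_apply, Matrix.of_apply]
  rw [Finset.prod_univ_sum]
  simp [Finset.prod_mul_distrib]

lemma tpow_one : tpow d n (1 : Matrix (Fin d) (Fin d) ℂ) = 1 := by
  ext x y
  by_cases h : x = y
  · subst h; simp [tpow, Matrix.one_apply]
  · obtain ⟨i, hi⟩ : ∃ i, x i ≠ y i := by
      by_contra hc
      push_neg at hc
      exact h (funext hc)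
    rw [Matrix.one_apply_ne h]
    exact Finset.prod_eq_zero (Finset.mem_univ i) (by simp [Matrix.one_apply, hi])

lemma tpow_conjTranspose (A : Matrix (Fin d) (Fin d) ℂ) :
    tpow d n Aᴴ = (tpow d n A)ᴴ := by
  ext x y
  simp [tpow, Matrix.conjTranspose_apply, star_prod]

/-- The `n`-fold tensor power of a unitary. -/
def TM (d n : ℕ) (U : UG d) : Matrix (Fin n → Fin d) (Fin n → Fin d) ℂ :=
  tpow d n (U : Matrix (Fin d) (Fin d) ℂ)

lemma TM_mul (U V : UG d) : TM d n (U * V) = TM d n U * TM d n V := by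
  simp [TM, tpow_mul]

lemma TM_inv (U : UG d) : TM d n U⁻¹ = (TM d n U)ᴴ := by
  have h : ((U⁻¹ : UG d) : Matrix (Fin d) (Fin d) ℂ)
      = (U : Matrix (Fin d) (Fin d) ℂ)ᴴ := rfl
  rw [TM, h, tpow_conjTranspose]; rfl

lemma TM_H_mul (U : UG d) : (TM d n U)ᴴ * TM d n U = 1 := by
  rw [← TM_inv, ← TM_mul, inv_mul_cancel]
  simp [TM, tpow_one]

lemma TM_mul_H (U : UG d) : TM d n U * (TM d n U)ᴴ = 1 := by
  rw [← TM_inv, ← TM_mul, mul_inv_cancel]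
  simp [TM, tpow_one]

lemma TM_continuous : Continuous fun U : UG d => TM d n U := by
  apply continuous_matrix
  intro x y
  show Continuous fun U : UG d => ∏ i, (U : Matrix (Fin d) (Fin d) ℂ) (x i) (y i)
  exact continuous_finset_prod _ fun i _ => continuous_subtype_val.matrix_elem _ _

lemma unitary_entry_norm_le (U : UG d) (a b : Fin d) :
    ‖(U : Matrix (Fin d) (Fin d) ℂ) a b‖ ≤ 1 := by
  have h1 : (star (U : Matrix (Fin d) (Fin d) ℂ) * (U : Matrix (Fin d) (Fin d) ℂ)) b b
      = 1 := by rw [U.2.1]; simp [Matrix.one_apply]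
  rw [Matrix.mul_apply] at h1
  have h2 : ∀ k, (star (U : Matrix (Fin d) (Fin d) ℂ)) b k *
      (U : Matrix (Fin d) (Fin d) ℂ) k b
      = ((‖(U : Matrix (Fin d) (Fin d) ℂ) k b‖ ^ 2 : ℝ) : ℂ) := by
    intro k
    rw [Matrix.star_apply]
    rw [show (star ((U : Matrix (Fin d) (Fin d) ℂ) k b)
        = (starRingEnd ℂ) ((U : Matrix (Fin d) (Fin d) ℂ) k b)) from rfl]
    rw [Complex.conj_mul']
    push_cast
    ring
  rw [Finset.sum_congr rfl fun k _ => h2 k, ← Complex.ofReal_sum] at h1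
  have h3 : ∑ k, ‖(U : Matrix (Fin d) (Fin d) ℂ) k b‖ ^ 2 = 1 := by
    exact_mod_cast h1
  have h4 : ‖(U : Matrix (Fin d) (Fin d) ℂ) a b‖ ^ 2 ≤ 1 := by
    rw [← h3]
    exact Finset.single_le_sum (f := fun k => ‖(U : Matrix (Fin d) (Fin d) ℂ) k b‖ ^ 2)
      (fun k _ => sq_nonneg _) (Finset.mem_univ a)
  nlinarith [norm_nonneg ((U : Matrix (Fin d) (Fin d) ℂ) a b)]

lemma TM_entry_norm_le (U : UG d) (x y : Fin n → Fin d) : ‖TM d n U x y‖ ≤ 1 := by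
  rw [TM, tpow, Matrix.of_apply, norm_prod]
  exact Finset.prod_le_one (fun i _ => norm_nonneg _)
    (fun i _ => unitary_entry_norm_le U _ _)

lemma TM_H_entry_norm_le (U : UG d) (x y : Fin n → Fin d) :
    ‖(TM d n U)ᴴ x y‖ ≤ 1 := by
  rw [Matrix.conjTranspose_apply, norm_star]
  exact TM_entry_norm_le U y x

lemma integrable_cont_bdd {q : Measure (UG d)} [IsFiniteMeasure q] {f : UG d → ℂ}
    (hf : Continuous f) {C : ℝ} (hC : ∀ U, ‖f U‖ ≤ C) : Integrable f q :=
  ⟨hf.aestronglyMeasurable, HasFiniteIntegral.of_bounded (Filter.Eventually.of_forall hC)⟩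

lemma entry_mul_mul_bound (A P B : Matrix (Fin n → Fin d) (Fin n → Fin d) ℂ)
    (hA : ∀ x y, ‖A x y‖ ≤ 1) (hB : ∀ x y, ‖B x y‖ ≤ 1) (x y : Fin n → Fin d) :
    ‖(A * P * B) x y‖ ≤ ∑ a, ∑ b, ‖P a b‖ := by
  have h1 : (A * P * B) x y = ∑ b, ∑ a, A x a * P a b * B b y := by
    simp [Matrix.mul_apply, Finset.sum_mul]
  rw [h1]
  calc ‖∑ b, ∑ a, A x a * P a b * B b y‖
      ≤ ∑ b, ∑ a, ‖A x a * P a b * B b y‖ :=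
        (norm_sum_le _ _).trans (Finset.sum_le_sum fun b _ => norm_sum_le _ _)
    _ ≤ ∑ b, ∑ a, ‖P a b‖ := by
        refine Finset.sum_le_sum fun b _ => Finset.sum_le_sum fun a _ => ?_
        rw [norm_mul, norm_mul]
        calc ‖A x a‖ * ‖P a b‖ * ‖B b y‖
            ≤ ‖A x a‖ * ‖P a b‖ * 1 := by
              have := hB b y
              have h5 : 0 ≤ ‖A x a‖ * ‖P a b‖ := by positivity
              nlinarith
          _ = ‖A x a‖ * ‖P a b‖ := by ring
          _ ≤ 1 * ‖P a b‖ := by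
              have := hA x a
              have := norm_nonneg (P a b)
              nlinarith
          _ = ‖P a b‖ := by ring
    _ = ∑ a, ∑ b, ‖P a b‖ := Finset.sum_comm

lemma integrable_sandwich_left {q : Measure (UG d)} [IsFiniteMeasure q]
    (P : Matrix (Fin n → Fin d) (Fin n → Fin d) ℂ) (x y : Fin n → Fin d) :
    Integrable (fun U : UG d => (TM d n U * P * (TM d n U)ᴴ) x y) q := by
  refine integrable_cont_bdd ?_ (C := ∑ a, ∑ b, ‖P a b‖) ?_
  · exact ((TM_continuous.matrix_mul continuous_const).matrix_mul
      TM_continuous.matrix_conjTranspose).matrix_elem x y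
  · exact fun U => entry_mul_mul_bound _ P _ (TM_entry_norm_le U) (TM_H_entry_norm_le U) x y

lemma integrable_sandwich_right {q : Measure (UG d)} [IsFiniteMeasure q]
    (P : Matrix (Fin n → Fin d) (Fin n → Fin d) ℂ) (x y : Fin n → Fin d) :
    Integrable (fun U : UG d => ((TM d n U)ᴴ * P * TM d n U) x y) q := by
  refine integrable_cont_bdd ?_ (C := ∑ a, ∑ b, ‖P a b‖) ?_
  · exact ((TM_continuous.matrix_conjTranspose.matrix_mul continuous_const).matrix_mul
      TM_continuous).matrix_elem x y
  · exact fun U => entry_mul_mul_bound _ P _ (TM_H_entry_norm_le U) (TM_entry_norm_le U) x y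

lemma sum_sum_integral {q : Measure (UG d)}
    (g : (Fin n → Fin d) → (Fin n → Fin d) → UG d → ℂ)
    (hg : ∀ a b, Integrable (g a b) q) :
    ∑ a, ∑ b, (∫ U, g a b U ∂q) = ∫ U, (∑ a, ∑ b, g a b U) ∂q :=
  calc ∑ a, ∑ b, (∫ U, g a b U ∂q)
      = ∑ a, ∫ U, (∑ b, g a b U) ∂q :=
        Finset.sum_congr rfl fun a _ => (integral_finset_sum _ fun b _ => hg a b).symm
    _ = ∫ U, (∑ a, ∑ b, g a b U) ∂q :=
        (integral_finset_sum _ fun a _ =>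
          integrable_finset_sum _ fun b _ => hg a b).symm

/-- Trace against a twirled rank-one word state. -/
lemma trace_mul_rhoWord (Q : Matrix (Fin n → Fin d) (Fin n → Fin d) ℂ)
    (w : Fin n → Fin d) (q : Measure (UG d)) [IsFiniteMeasure q] :
    Matrix.trace (Q * rhoWord d n w q)
      = ∫ U, ((TM d n U)ᴴ * Q * TM d n U) w w ∂q := by
  have hint : ∀ a b : Fin n → Fin d,
      Integrable (fun U : UG d => Q a b * (TM d n U b w * star (TM d n U a w))) q := by
    intro a b
    refine Integrable.const_mul (integrable_cont_bdd ?_ (C := 1) ?_) _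
    · exact (TM_continuous.matrix_elem b w).mul (TM_continuous.matrix_elem a w).star
    · intro U
      rw [norm_mul, norm_star]
      have := TM_entry_norm_le U b w
      have := TM_entry_norm_le U a w
      nlinarith [norm_nonneg (TM d n U b w), norm_nonneg (TM d n U a w)]
  calc Matrix.trace (Q * rhoWord d n w q)
      = ∑ a, ∑ b, Q a b * (rhoWord d n w q) b a := by
        simp [Matrix.trace, Matrix.diag, Matrix.mul_apply]
    _ = ∑ a, ∑ b, ∫ U, Q a b * (TM d n U b w * star (TM d n U a w)) ∂q := by
        refine Finset.sum_congr rfl fun a _ => Finset.sum_congr rfl fun b _ => ?_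
        rw [show (rhoWord d n w q) b a
            = ∫ U, TM d n U b w * star (TM d n U a w) ∂q from rfl,
          integral_const_mul]
    _ = ∫ U, ∑ a, ∑ b, Q a b * (TM d n U b w * star (TM d n U a w)) ∂q :=
        sum_sum_integral _ hint
    _ = ∫ U, ((TM d n U)ᴴ * Q * TM d n U) w w ∂q := by
        refine integral_congr_ae (Filter.Eventually.of_forall fun U => ?_)
        simp only [Matrix.mul_apply, Matrix.conjTranspose_apply, Finset.sum_mul]
        rw [Finset.sum_comm]
        exact Finset.sum_congr rfl fun a _ => Finset.sum_congr rfl fun b _ => by ring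

lemma trace_covariant (Q : Matrix (Fin n → Fin d) (Fin n → Fin d) ℂ)
    (hQ : ∀ V : UG d, TM d n V * Q = Q * TM d n V) (w : Fin n → Fin d)
    (q : Measure (UG d)) [IsProbabilityMeasure q] :
    Matrix.trace (Q * rhoWord d n w q) = Q w w := by
  rw [trace_mul_rhoWord]
  have h : ∀ U : UG d, (TM d n U)ᴴ * Q * TM d n U = Q := by
    intro U
    rw [Matrix.mul_assoc, ← hQ U, ← Matrix.mul_assoc, TM_H_mul, Matrix.one_mul]
  simp_rw [h]
  simp

/-- Entry of a triple product against an entrywise-integral matrix. -/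
lemma mul_ofIntegral_mul (q : Measure (UG d)) [IsFiniteMeasure q]
    (A B : Matrix (Fin n → Fin d) (Fin n → Fin d) ℂ)
    (f : UG d → Matrix (Fin n → Fin d) (Fin n → Fin d) ℂ)
    (hf : ∀ a b, Integrable (fun U => f U a b) q) (x y : Fin n → Fin d) :
    (A * (Matrix.of fun a b => ∫ U, f U a b ∂q) * B) x y
      = ∫ U, (A * f U * B) x y ∂q := by
  have hint : ∀ b a : Fin n → Fin d,
      Integrable (fun U => A x a * f U a b * B b y) q := fun b a =>
    ((hf a b).const_mul _).mul_const _
  calc (A * (Matrix.of fun a b => ∫ U, f U a b ∂q) * B) x y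
      = ∑ b, ∑ a, A x a * (∫ U, f U a b ∂q) * B b y := by
        simp [Matrix.mul_apply, Finset.sum_mul]
    _ = ∑ b, ∑ a, ∫ U, A x a * f U a b * B b y ∂q := by
        refine Finset.sum_congr rfl fun b _ => Finset.sum_congr rfl fun a _ => ?_
        rw [integral_mul_const, integral_const_mul]
    _ = ∫ U, ∑ b, ∑ a, A x a * f U a b * B b y ∂q := sum_sum_integral _ hint
    _ = ∫ U, (A * f U * B) x y ∂q := by
        refine integral_congr_ae (Filter.Eventually.of_forall fun U => ?_)
        simp [Matrix.mul_apply, Finset.sum_mul]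

/-- Quadratic form of an entrywise-integral matrix. -/
lemma quad_ofIntegral (q : Measure (UG d)) [IsFiniteMeasure q]
    (f : UG d → Matrix (Fin n → Fin d) (Fin n → Fin d) ℂ)
    (hf : ∀ a b, Integrable (fun U => f U a b) q) (v : (Fin n → Fin d) → ℂ) :
    star v ⬝ᵥ (Matrix.of fun a b => ∫ U, f U a b ∂q) *ᵥ v
      = ∫ U, star v ⬝ᵥ (f U) *ᵥ v ∂q := by
  have hint : ∀ a b : Fin n → Fin d,
      Integrable (fun U => star (v a) * (f U a b * v b)) q := fun a b =>
    (((hf a b).mul_const _).const_mul _)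
  calc star v ⬝ᵥ (Matrix.of fun a b => ∫ U, f U a b ∂q) *ᵥ v
      = ∑ a, ∑ b, star (v a) * ((∫ U, f U a b ∂q) * v b) := by
        simp [dotProduct, Matrix.mulVec, Finset.mul_sum]
    _ = ∑ a, ∑ b, ∫ U, star (v a) * (f U a b * v b) ∂q := by
        refine Finset.sum_congr rfl fun a _ => Finset.sum_congr rfl fun b _ => ?_
        rw [integral_const_mul, integral_mul_const]
    _ = ∫ U, ∑ a, ∑ b, star (v a) * (f U a b * v b) ∂q := sum_sum_integral _ hint
    _ = ∫ U, star v ⬝ᵥ (f U) *ᵥ v ∂q := by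
        refine integral_congr_ae (Filter.Eventually.of_forall fun U => ?_)
        simp [dotProduct, Matrix.mulVec, Finset.mul_sum]

lemma integral_cnonneg {q : Measure (UG d)} {f : UG d → ℂ}
    (hf : Integrable f q) (h : ∀ U, 0 ≤ f U) : 0 ≤ ∫ U, f U ∂q := by
  rw [Complex.le_def]
  have hre : ∫ U, (f U).re ∂q = (∫ U, f U ∂q).re := integral_re hf
  have him : ∫ U, (f U).im ∂q = (∫ U, f U ∂q).im := integral_im hf
  constructor
  · rw [← hre]
    simp only [Complex.zero_re]
    exact integral_nonneg fun U => (Complex.le_def.mp (h U)).1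
  · rw [← him]
    have h0 : ∀ U, (f U).im = 0 := fun U => ((Complex.le_def.mp (h U)).2).symm
    simp [h0]

lemma integral_left_translate (haar : Measure (UG d)) [IsProbabilityMeasure haar]
    (hinv : ∀ V : UG d, Measure.map (fun U => V * U) haar = haar)
    (f : UG d → ℂ) (hf : Continuous f) (V : UG d) :
    ∫ U, f (V * U) ∂haar = ∫ U, f U ∂haar := by
  conv_rhs => rw [← hinv V]
  rw [integral_map (continuous_mul_left V).aemeasurable hf.aestronglyMeasurable]

lemma inv_integral (haar : Measure (UG d)) [IsProbabilityMeasure haar]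
    (hinv : ∀ V : UG d, Measure.map (fun U => V * U) haar = haar)
    (f : UG d → ℂ) (hf : Continuous f) (C : ℝ) (hC : ∀ U, ‖f U‖ ≤ C) :
    ∫ U, f U⁻¹ ∂haar = ∫ U, f U ∂haar := by
  have hmul : Continuous fun p : UG d × UG d => f (p.1⁻¹ * p.2) :=
    hf.comp ((continuous_fst.inv).mul continuous_snd)
  have hint : Integrable (Function.uncurry fun x y : UG d => f (x⁻¹ * y))
      (haar.prod haar) :=
    ⟨hmul.aestronglyMeasurable,
      HasFiniteIntegral.of_bounded (Filter.Eventually.of_forall fun p => hC _)⟩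
  have hswap := integral_integral_swap hint
  have h1 : ∀ x : UG d, ∫ y, f (x⁻¹ * y) ∂haar = ∫ y, f y ∂haar := fun x =>
    integral_left_translate haar hinv f hf x⁻¹
  have h2 : ∀ y : UG d, ∫ x, f (x⁻¹ * y) ∂haar = ∫ x, f x⁻¹ ∂haar := by
    intro y
    have hg : Continuous fun x : UG d => f x⁻¹ := hf.comp continuous_inv
    have := integral_left_translate haar hinv (fun x => f x⁻¹) hg y⁻¹
    calc ∫ x, f (x⁻¹ * y) ∂haar = ∫ x, f ((y⁻¹ * x)⁻¹) ∂haar := by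
          refine integral_congr_ae (Filter.Eventually.of_forall fun x => ?_)
          simp only [_root_.mul_inv_rev, inv_inv]
      _ = ∫ x, f x⁻¹ ∂haar := this
  rw [show (∫ x, ∫ y, f (x⁻¹ * y) ∂haar ∂haar) = ∫ y, f y ∂haar by
      simp_rw [h1]; simp] at hswap
  rw [show (∫ y, ∫ x, f (x⁻¹ * y) ∂haar ∂haar) = ∫ x, f x⁻¹ ∂haar by
      simp_rw [h2]; simp] at hswap
  exact hswap.symm

/-- The Haar twirl of a matrix. -/
def Stw (d n : ℕ) (haar : Measure (UG d))
    (P : Matrix (Fin n → Fin d) (Fin n → Fin d) ℂ) :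
    Matrix (Fin n → Fin d) (Fin n → Fin d) ℂ :=
  Matrix.of fun x y => ∫ U, (TM d n U * P * (TM d n U)ᴴ) x y ∂haar

variable (haar : Measure (UG d)) [IsProbabilityMeasure haar]

lemma Stw_conj_inv
    (hinv : ∀ V : UG d, Measure.map (fun U => V * U) haar = haar)
    (P : Matrix (Fin n → Fin d) (Fin n → Fin d) ℂ) (V : UG d) :
    TM d n V * Stw d n haar P * (TM d n V)ᴴ = Stw d n haar P := by
  ext x y
  rw [show Stw d n haar P = Matrix.of fun a b =>
      ∫ U, (TM d n U * P * (TM d n U)ᴴ) a b ∂haar from rfl]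
  rw [mul_ofIntegral_mul haar _ _ _ (fun a b => integrable_sandwich_left P a b) x y]
  have h1 : ∀ U : UG d,
      (TM d n V * (TM d n U * P * (TM d n U)ᴴ) * (TM d n V)ᴴ) x y
        = (TM d n (V * U) * P * (TM d n (V * U))ᴴ) x y := by
    intro U
    rw [TM_mul, Matrix.conjTranspose_mul]
    simp only [Matrix.mul_assoc]
  simp_rw [h1]
  exact integral_left_translate haar hinv
    (fun W => (TM d n W * P * (TM d n W)ᴴ) x y)
    (((TM_continuous.matrix_mul continuous_const).matrix_mul
      TM_continuous.matrix_conjTranspose).matrix_elem x y) V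

lemma Stw_comm
    (hinv : ∀ V : UG d, Measure.map (fun U => V * U) haar = haar)
    (P : Matrix (Fin n → Fin d) (Fin n → Fin d) ℂ) (V : UG d) :
    TM d n V * Stw d n haar P = Stw d n haar P * TM d n V := by
  calc TM d n V * Stw d n haar P
      = TM d n V * Stw d n haar P * ((TM d n V)ᴴ * TM d n V) := by
        rw [TM_H_mul, Matrix.mul_one]
    _ = (TM d n V * Stw d n haar P * (TM d n V)ᴴ) * TM d n V := by
        simp only [Matrix.mul_assoc]
    _ = Stw d n haar P * TM d n V := by rw [Stw_conj_inv haar hinv]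

lemma Stw_one_sub (P : Matrix (Fin n → Fin d) (Fin n → Fin d) ℂ) :
    Stw d n haar (1 - P) = 1 - Stw d n haar P := by
  ext x y
  have h1 : ∀ U : UG d, (TM d n U * (1 - P) * (TM d n U)ᴴ) x y
      = (1 : Matrix (Fin n → Fin d) (Fin n → Fin d) ℂ) x y
        - (TM d n U * P * (TM d n U)ᴴ) x y := by
    intro U
    rw [Matrix.mul_sub, Matrix.sub_mul, Matrix.sub_apply, Matrix.mul_one, TM_mul_H]
  show (∫ U, (TM d n U * (1 - P) * (TM d n U)ᴴ) x y ∂haar) = _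
  simp_rw [h1]
  rw [integral_sub (integrable_const _) (integrable_sandwich_left P x y),
    integral_const]
  simp [Matrix.sub_apply]
  rfl

lemma Stw_isHermitian (P : Matrix (Fin n → Fin d) (Fin n → Fin d) ℂ)
    (hP : P.IsHermitian) : (Stw d n haar P).IsHermitian := by
  refine Matrix.IsHermitian.ext fun x y => ?_
  show star ((Stw d n haar P) y x) = (Stw d n haar P) x y
  rw [show (Stw d n haar P) y x = ∫ U, (TM d n U * P * (TM d n U)ᴴ) y x ∂haar from rfl,
    show (Stw d n haar P) x y = ∫ U, (TM d n U * P * (TM d n U)ᴴ) x y ∂haar from rfl]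
  rw [show (star (∫ U, (TM d n U * P * (TM d n U)ᴴ) y x ∂haar))
      = (starRingEnd ℂ) (∫ U, (TM d n U * P * (TM d n U)ᴴ) y x ∂haar) from rfl]
  rw [← integral_conj]
  refine integral_congr_ae (Filter.Eventually.of_forall fun U => ?_)
  show (starRingEnd ℂ) ((TM d n U * P * (TM d n U)ᴴ) y x)
      = (TM d n U * P * (TM d n U)ᴴ) x y
  rw [show (starRingEnd ℂ) ((TM d n U * P * (TM d n U)ᴴ) y x)
      = ((TM d n U * P * (TM d n U)ᴴ)ᴴ) x y from rfl]
  rw [Matrix.conjTranspose_mul, Matrix.conjTranspose_mul,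
    Matrix.conjTranspose_conjTranspose, hP.eq]
  simp only [Matrix.mul_assoc]

lemma Stw_posSemidef (P : Matrix (Fin n → Fin d) (Fin n → Fin d) ℂ)
    (hP : P.PosSemidef) : (Stw d n haar P).PosSemidef := by
  refine .of_dotProduct_mulVec_nonneg (Stw_isHermitian haar P hP.1) fun v => ?_
  rw [show Stw d n haar P = Matrix.of fun a b =>
      ∫ U, (TM d n U * P * (TM d n U)ᴴ) a b ∂haar from rfl]
  rw [quad_ofIntegral haar _ (fun a b => integrable_sandwich_left P a b) v]
  have hint : Integrable
      (fun U : UG d => star v ⬝ᵥ (TM d n U * P * (TM d n U)ᴴ) *ᵥ v) haar := by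
    have heq : (fun U : UG d => star v ⬝ᵥ (TM d n U * P * (TM d n U)ᴴ) *ᵥ v)
        = fun U => ∑ a, ∑ b, star (v a) * ((TM d n U * P * (TM d n U)ᴴ) a b * v b) := by
      funext U
      simp [dotProduct, Matrix.mulVec, Finset.mul_sum]
    rw [heq]
    exact integrable_finset_sum _ fun a _ => integrable_finset_sum _ fun b _ =>
      (((integrable_sandwich_left P a b).mul_const _).const_mul _)
  refine integral_cnonneg hint fun U => ?_
  exact (hP.mul_mul_conjTranspose_same (TM d n U)).dotProduct_mulVec_nonneg v

lemma Stw_mem_POVMs (P : Matrix (Fin n → Fin d) (Fin n → Fin d) ℂ)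
    (hP : P ∈ POVMs d n) : Stw d n haar P ∈ POVMs d n := by
  refine ⟨Stw_posSemidef haar P hP.1, ?_⟩
  rw [← Stw_one_sub haar P]
  exact Stw_posSemidef haar _ hP.2

lemma psd_diag_nonneg {C : Matrix (Fin n → Fin d) (Fin n → Fin d) ℂ}
    (hC : C.PosSemidef) (w : Fin n → Fin d) : 0 ≤ C w w := by
  have h := hC.dotProduct_mulVec_nonneg (Pi.single w 1)
  simpa [dotProduct, Matrix.mulVec, Pi.single_apply, mul_ite, ite_mul,
    Finset.sum_ite_eq, Finset.sum_ite_eq'] using h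

lemma trace_povm_re_le_one (P : Matrix (Fin n → Fin d) (Fin n → Fin d) ℂ)
    (hP : P ∈ POVMs d n) (w : Fin n → Fin d)
    (q : Measure (UG d)) [IsProbabilityMeasure q] :
    (Matrix.trace (P * rhoWord d n w q)).re ≤ 1 := by
  rw [trace_mul_rhoWord]
  have hzint : Integrable (fun U : UG d => ((TM d n U)ᴴ * P * TM d n U) w w) q :=
    integrable_sandwich_right P w w
  have hub : ∀ U : UG d, (((TM d n U)ᴴ * P * TM d n U) w w).re ≤ 1 := by
    intro U
    have hpsd : ((TM d n U)ᴴ * (1 - P) * TM d n U).PosSemidef :=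
      hP.2.conjTranspose_mul_mul_same (TM d n U)
    have heq : (TM d n U)ᴴ * (1 - P) * TM d n U
        = 1 - (TM d n U)ᴴ * P * TM d n U := by
      rw [Matrix.mul_sub, Matrix.sub_mul, Matrix.mul_one, TM_H_mul]
    rw [heq] at hpsd
    have h0 := psd_diag_nonneg hpsd w
    rw [Matrix.sub_apply, Matrix.one_apply_eq] at h0
    have := (Complex.le_def.mp h0).1
    simp only [Complex.zero_re, Complex.sub_re, Complex.one_re] at this
    linarith
  have hre : (∫ U, ((TM d n U)ᴴ * P * TM d n U) w w ∂q).re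
      = ∫ U, (((TM d n U)ᴴ * P * TM d n U) w w).re ∂q := by
    have h' := integral_re hzint
    simpa [RCLike.re_eq_complex_re] using h'.symm
  rw [hre]
  calc (∫ U, (((TM d n U)ᴴ * P * TM d n U) w w).re ∂q)
      ≤ ∫ _U, (1 : ℝ) ∂q := integral_mono hzint.re (integrable_const 1) hub
    _ = 1 := by simp

lemma trace_haar_eq_Stw
    (hinv : ∀ V : UG d, Measure.map (fun U => V * U) haar = haar)
    (P : Matrix (Fin n → Fin d) (Fin n → Fin d) ℂ) (w : Fin n → Fin d) :
    Matrix.trace (P * rhoWord d n w haar) = Stw d n haar P w w := by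
  rw [trace_mul_rhoWord]
  have h := inv_integral haar hinv (fun U => ((TM d n U)ᴴ * P * TM d n U) w w)
    (((TM_continuous.matrix_conjTranspose.matrix_mul continuous_const).matrix_mul
      TM_continuous).matrix_elem w w)
    (∑ a, ∑ b, ‖P a b‖)
    (fun U => entry_mul_mul_bound _ P _ (TM_H_entry_norm_le U) (TM_entry_norm_le U) w w)
  rw [show Stw d n haar P w w
      = ∫ U, (TM d n U * P * (TM d n U)ᴴ) w w ∂haar from rfl]
  rw [← h]
  refine integral_congr_ae (Filter.Eventually.of_forall fun U => ?_)
  show ((TM d n U⁻¹)ᴴ * P * TM d n U⁻¹) w w = (TM d n U * P * (TM d n U)ᴴ) w w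
  rw [TM_inv, Matrix.conjTranspose_conjTranspose]

end AdvHaar

/-- Minimax: the adversarial-unknown value over all Borel probability
measures `q` on `U(d)` equals the Haar-random value. -/
theorem adversarial_equals_haar (d n : ℕ) (hd : 2 ≤ d) (hn : 1 ≤ n)
    (μ : Fin d → ℕ) (hmono : ∀ i j : Fin d, i ≤ j → μ j ≤ μ i) (hsum : ∑ i, μ i = n)
    (hμ2 : 1 ≤ μ ⟨1, by omega⟩)
    (p : ℝ) (hp0 : 0 ≤ p) (hp1 : p ≤ 1)
    (haar : Measure (UG d)) [IsProbabilityMeasure haar]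
    (hinv : ∀ V : UG d, Measure.map (fun U => V * U) haar = haar) :
    sInf {v : ℝ | ∃ q : ProbabilityMeasure (UG d),
        v = sSup (advSuccess d n (by omega) μ hsum p (q : Measure (UG d)) '' POVMs d n)}
      = sSup (advSuccess d n (by omega) μ hsum p haar '' POVMs d n) := by
  classical
  have hd0 : 0 < d := by omega
  open AdvHaar in
  show sInf {v : ℝ | ∃ q : ProbabilityMeasure (UG d),
        v = sSup (advSuccess d n hd0 μ hsum p (q : Measure (UG d)) '' POVMs d n)}
      = sSup (advSuccess d n hd0 μ hsum p haar '' POVMs d n)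
  set w1 : Fin n → Fin d := word d n (muEq d n hd0) (muEq_sum d n hd0) with hw1
  set w2 : Fin n → Fin d := word d n μ hsum with hw2
  have hmem0 : (0 : Matrix (Fin n → Fin d) (Fin n → Fin d) ℂ) ∈ POVMs d n :=
    ⟨Matrix.PosSemidef.zero, by simpa using (Matrix.PosSemidef.one :
      (1 : Matrix (Fin n → Fin d) (Fin n → Fin d) ℂ).PosSemidef)⟩
  have hne : ∀ q : Measure (UG d),
      (advSuccess d n hd0 μ hsum p q '' POVMs d n).Nonempty := fun q =>
    ⟨_, Set.mem_image_of_mem _ hmem0⟩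
  have hbdd : ∀ (q : Measure (UG d)), IsProbabilityMeasure q →
      BddAbove (advSuccess d n hd0 μ hsum p q '' POVMs d n) := by
    intro q hq
    refine ⟨1, ?_⟩
    rintro v ⟨P, hP, rfl⟩
    have hP' : (1 - P) ∈ POVMs d n := ⟨hP.2, by simpa [sub_sub_cancel] using hP.1⟩
    have h1 := AdvHaar.trace_povm_re_le_one P hP w1 q
    have h2 := AdvHaar.trace_povm_re_le_one (1 - P) hP' w2 q
    unfold advSuccess
    nlinarith
  have hkey : ∀ (q : Measure (UG d)), IsProbabilityMeasure q →
      ∀ P ∈ POVMs d n,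
      advSuccess d n hd0 μ hsum p q (AdvHaar.Stw d n haar P)
        = advSuccess d n hd0 μ hsum p haar P := by
    intro q hq P hP
    unfold advSuccess
    have c1 : Matrix.trace (AdvHaar.Stw d n haar P * rhoWord d n w1 q)
        = AdvHaar.Stw d n haar P w1 w1 :=
      AdvHaar.trace_covariant _ (fun V => AdvHaar.Stw_comm haar hinv P V) w1 q
    have c2 : Matrix.trace ((1 - AdvHaar.Stw d n haar P) * rhoWord d n w2 q)
        = AdvHaar.Stw d n haar (1 - P) w2 w2 := by
      rw [← AdvHaar.Stw_one_sub haar P]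
      exact AdvHaar.trace_covariant _
        (fun V => AdvHaar.Stw_comm haar hinv (1 - P) V) w2 q
    have c3 : Matrix.trace (P * rhoWord d n w1 haar)
        = AdvHaar.Stw d n haar P w1 w1 := AdvHaar.trace_haar_eq_Stw haar hinv P w1
    have c4 : Matrix.trace ((1 - P) * rhoWord d n w2 haar)
        = AdvHaar.Stw d n haar (1 - P) w2 w2 :=
      AdvHaar.trace_haar_eq_Stw haar hinv (1 - P) w2
    rw [c1, c2, c3, c4]
  have hle : ∀ (q : Measure (UG d)), IsProbabilityMeasure q →
      sSup (advSuccess d n hd0 μ hsum p haar '' POVMs d n)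
        ≤ sSup (advSuccess d n hd0 μ hsum p q '' POVMs d n) := by
    intro q hq
    refine csSup_le (hne haar) ?_
    rintro y ⟨P, hP, rfl⟩
    rw [← hkey q hq P hP]
    exact le_csSup (hbdd q hq)
      (Set.mem_image_of_mem _ (AdvHaar.Stw_mem_POVMs haar P hP))
  have hlow : ∀ v ∈ {v : ℝ | ∃ q : ProbabilityMeasure (UG d),
      v = sSup (advSuccess d n hd0 μ hsum p (q : Measure (UG d)) '' POVMs d n)},
      sSup (advSuccess d n hd0 μ hsum p haar '' POVMs d n) ≤ v := by
    rintro v ⟨q, rfl⟩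
    exact hle (q : Measure (UG d)) q.2
  have hmemhaar : sSup (advSuccess d n hd0 μ hsum p haar '' POVMs d n)
      ∈ {v : ℝ | ∃ q : ProbabilityMeasure (UG d),
        v = sSup (advSuccess d n hd0 μ hsum p (q : Measure (UG d)) '' POVMs d n)} :=
    ⟨⟨haar, inferInstance⟩, rfl⟩
  exact le_antisymm (csInf_le ⟨_, hlow⟩ hmemhaar) (le_csInf ⟨_, hmemhaar⟩ hlow)

end
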